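/- Let E ⊆ ℝ. Then at least one of the following holds: (1) there is a unit vector u in ℝ² such that the restriction of the orthogonal projection T_u to E² is a quasi-isometric embedding of E² into ℝ; (2) there is a linear map S : ℝ⁴ → ℝ such that S(E⁴) is dense in ℝ. -/

import Mathlib

open Filter Metric Set

/-- `f` is a `(lam, δ)`-quasi-isometry from `X` to `Y`. -/
def IsQuasiIsometryOn {α β : Type*} [PseudoMetricSpace α] [PseudoMetricSpace β]
    (f : α → β) (X : Set α) (Y : Set β) (lam δ : ℝ) : Prop :=
  (∀ x ∈ X, f x ∈ Y) ∧
  (∀ x ∈ X, ∀ x' ∈ X,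
    lam⁻¹ * dist x x' - δ ≤ dist (f x) (f x') ∧ dist (f x) (f x') ≤ lam * dist x x' + δ) ∧
  (∀ y ∈ Y, ∃ x ∈ X, dist (f x) y < δ)

/-- `Tu u : ℝ² → ℝ` is the orthogonal projection parallel to `u`, i.e. the orthogonal projection
(with the orthogonal complement of `u` identified isometrically with `ℝ`) whose fibers are the
lines parallel to `u`: `Tu u x = Tu u y ↔ x - y = t • u` for some `t : ℝ` (when `‖u‖ = 1`). -/
def Tu (u x : EuclideanSpace ℝ (Fin 2)) : ℝ :=
  x 0 * u 1 - x 1 * u 0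


lemma abs_le_sqrt_sq_add_sq (q p : ℝ) : |q| ≤ Real.sqrt (q^2 + p^2) := by
  rw [← Real.sqrt_sq_eq_abs]
  exact Real.sqrt_le_sqrt (by nlinarith [sq_nonneg p])

lemma sqrt_sq_add_sq_le (q p : ℝ) : Real.sqrt (q^2 + p^2) ≤ |q| + |p| := by
  rw [← Real.sqrt_sq (by positivity : (0:ℝ) ≤ |q| + |p|)]
  refine Real.sqrt_le_sqrt ?_
  nlinarith [sq_abs q, sq_abs p, mul_nonneg (abs_nonneg q) (abs_nonneg p)]

lemma helper_lam (c0 t ε' : ℝ) (h1 : 1 ≤ c0) (h2 : 0 ≤ t) (h3 : 0 < ε') (h4 : ε' ≤ 1) :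
    2 ≤ 2*c0*(1+t)/ε' := by
  rw [le_div_iff₀ h3]
  nlinarith

lemma helper_ub (s q p r c0 lam δ : ℝ) (hc01 : 1 ≤ c0) (hsc0 : |s| ≤ c0)
    (hqr : |q| ≤ r) (hpr : |p| ≤ r) (hlam2 : 2 ≤ lam) (hδpos : 0 < δ) :
    |q*s - p|/c0 ≤ lam * r + δ := by
  have hc0pos : (0:ℝ) < c0 := by linarith
  have h2 : |q*s - p| ≤ |q| * |s| + |p| :=
    (abs_sub _ _).trans_eq (by rw [abs_mul])
  have h3 : |q*s - p|/c0 ≤ |q| + |p| := by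
    rw [div_le_iff₀ hc0pos]
    nlinarith [abs_nonneg q, abs_nonneg p, abs_nonneg s]
  have hrnn : 0 ≤ r := le_trans (abs_nonneg q) hqr
  nlinarith

set_option maxHeartbeats 2000000 in
lemma helper_main (s ε M q p r : ℝ) (hε : 0 < ε) (hM : 0 < M)
    (hqr : |q| ≤ r) (hpr : |p| ≤ r) (hrqp : r ≤ |q| + |p|)
    (hlb : |q*s - p| / Real.sqrt (1+s^2) <
      (2*Real.sqrt (1+s^2)*(1+|s|)/min ε 1)⁻¹ * r - (M+1)*(min ε 1)/Real.sqrt (1+s^2)) :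
    M < |q| ∧ |p - s*q| < ε*|q| := by
  obtain ⟨c0, hc0⟩ : ∃ c0 : ℝ, c0 = Real.sqrt (1 + s^2) := ⟨_, rfl⟩
  obtain ⟨ε', hε'⟩ : ∃ e : ℝ, e = min ε 1 := ⟨_, rfl⟩
  obtain ⟨lam, hlam⟩ : ∃ l : ℝ, l = 2*c0*(1+|s|)/ε' := ⟨_, rfl⟩
  obtain ⟨δ, hδ⟩ : ∃ d : ℝ, d = (M+1)*ε'/c0 := ⟨_, rfl⟩
  rw [← hc0, ← hε', ← hlam, ← hδ] at hlb
  have hc0sq : c0^2 = 1 + s^2 := by rw [hc0]; exact Real.sq_sqrt (by positivity)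
  have hc0nn : 0 ≤ c0 := hc0 ▸ Real.sqrt_nonneg _
  have hc01 : 1 ≤ c0 := by nlinarith [sq_nonneg s]
  have hc0pos : 0 < c0 := by linarith
  have hsc0 : |s| ≤ c0 := by
    rw [hc0, ← Real.sqrt_sq_eq_abs]
    exact Real.sqrt_le_sqrt (by nlinarith)
  have ht0nn : (0:ℝ) ≤ |s| := abs_nonneg s
  have hε'pos : 0 < ε' := hε' ▸ lt_min hε one_pos
  have hε'1 : ε' ≤ 1 := hε' ▸ min_le_right _ _
  have hε'ε : ε' ≤ ε := hε' ▸ min_le_left _ _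
  have habs : (0:ℝ) < 1 + |s| := by linarith
  have hlampos : 0 < lam := by rw [hlam]; positivity
  have hδpos : 0 < δ := by rw [hδ]; positivity
  have hrnn : 0 ≤ r := le_trans (abs_nonneg q) hqr
  have hclam : c0 * lam⁻¹ = ε'/(2*(1+|s|)) := by
    rw [hlam]; field_simp
  have hclam2 : c0 * lam⁻¹ ≤ 1/2 := by
    rw [hclam, div_le_div_iff₀ (by positivity) (by norm_num)]
    nlinarith [ht0nn]
  have habsle : 0 ≤ |q*s - p| := abs_nonneg _
  have hkey : |q*s - p| < c0 * lam⁻¹ * r - c0 * δ := by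
    have h := (div_lt_iff₀ hc0pos).mp hlb
    nlinarith [h]
  have hrbig : lam * δ < r := by
    have h0 : 0 ≤ |q*s - p|/c0 := by positivity
    have h1 : δ < lam⁻¹ * r := by
      have := lt_of_le_of_lt h0 hlb
      nlinarith [this]
    have h2 : lam * δ < lam * (lam⁻¹ * r) := (mul_lt_mul_iff_right₀ hlampos).mpr h1
    have h3 : lam * (lam⁻¹ * r) = r := by field_simp
    linarith
  have hpbound : |p| ≤ |s| * |q| + |q*s - p| := by
    calc |p| = |q*s - (q*s - p)| := by ring_nf
      _ ≤ |q*s| + |q*s - p| := abs_sub _ _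
      _ = |s| * |q| + |q*s - p| := by rw [abs_mul]; ring
  have hr2q : r ≤ 2*(1+|s|)*|q| := by
    have h3 : r ≤ (1+|s|)*|q| + |q*s - p| := by
      calc r ≤ |q| + |p| := hrqp
        _ ≤ |q| + (|s| * |q| + |q*s - p|) := by linarith
        _ = (1+|s|)*|q| + |q*s - p| := by ring
    have h5 : c0*lam⁻¹*r ≤ (1/2)*r := mul_le_mul_of_nonneg_right hclam2 hrnn
    have h4 : |q*s - p| ≤ r/2 := by
      nlinarith [mul_pos hc0pos hδpos]
    linarith
  have hlamδ : lam * δ = 2*(1+|s|)*(M+1) := by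
    rw [hlam, hδ]; field_simp
  have hqM : M < |q| := by
    rw [hlamδ] at hrbig
    have h9 : 2*(1+|s|)*(M+1) < 2*(1+|s|)*|q| := lt_of_lt_of_le hrbig hr2q
    have h10 := (mul_lt_mul_iff_right₀ (by linarith : (0:ℝ) < 2*(1+|s|))).mp h9
    linarith
  refine ⟨hqM, ?_⟩
  have hfinal : |q*s - p| < ε*|q| := by
    have h5 : |q*s - p| < c0 * lam⁻¹ * r := by nlinarith [mul_pos hc0pos hδpos]
    have h6 : c0 * lam⁻¹ * r ≤ c0 * lam⁻¹ * (2*(1+|s|)*|q|) :=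
      mul_le_mul_of_nonneg_left hr2q (by positivity)
    have h7 : c0 * lam⁻¹ * (2*(1+|s|)*|q|) = ε'*|q| := by
      rw [hclam]; field_simp
    have h8 : ε'*|q| ≤ ε*|q| := mul_le_mul_of_nonneg_right hε'ε (abs_nonneg q)
    linarith
  rw [show p - s*q = -(q*s - p) by ring, abs_neg]
  exact hfinal

lemma aux_ratio (E : Set ℝ)
    (hne : ∀ (u : EuclideanSpace ℝ (Fin 2)) (lam δ : ℝ), ‖u‖ = 1 → 0 < lam → 0 < δ →
      ¬ IsQuasiIsometryOn (Tu u) {x : EuclideanSpace ℝ (Fin 2) | ∀ i, x i ∈ E}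
        (Tu u '' {x : EuclideanSpace ℝ (Fin 2) | ∀ i, x i ∈ E}) lam δ) :
    ∀ s ε M : ℝ, 0 < ε → 0 < M →
      ∃ p ∈ {d : ℝ | ∃ a ∈ E, ∃ b ∈ E, a - b = d},
        ∃ q ∈ {d : ℝ | ∃ a ∈ E, ∃ b ∈ E, a - b = d},
          M < |q| ∧ |p - s*q| < ε*|q| := by
  intro s ε M hε hM
  set c0 : ℝ := Real.sqrt (1 + s^2) with hc0
  have hc0sq : c0^2 = 1 + s^2 := Real.sq_sqrt (by positivity)
  have hc0nn : 0 ≤ c0 := Real.sqrt_nonneg _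
  have hc01 : 1 ≤ c0 := by nlinarith [sq_nonneg s]
  have hc0pos : 0 < c0 := by linarith
  have hsc0 : |s| ≤ c0 := by
    rw [hc0, ← Real.sqrt_sq_eq_abs]
    exact Real.sqrt_le_sqrt (by nlinarith)
  set ε' : ℝ := min ε 1 with hε'
  have hε'pos : 0 < ε' := lt_min hε one_pos
  have hε'1 : ε' ≤ 1 := min_le_right _ _
  set lam : ℝ := 2*c0*(1+|s|)/ε' with hlam
  have hlampos : 0 < lam := by positivity
  set δ : ℝ := (M+1)*ε'/c0 with hδ
  have hδpos : 0 < δ := by positivity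
  set u : EuclideanSpace ℝ (Fin 2) := (WithLp.equiv 2 (Fin 2 → ℝ)).symm ![1/c0, s/c0] with hu
  have hu0 : u 0 = 1/c0 := rfl
  have hu1 : u 1 = s/c0 := rfl
  have hunorm : ‖u‖ = 1 := by
    rw [EuclideanSpace.norm_eq, Fin.sum_univ_two, hu0, hu1, Real.sqrt_eq_one]
    rw [Real.norm_eq_abs, Real.norm_eq_abs, sq_abs, sq_abs]
    field_simp
    linarith [hc0sq]
  have hqi := hne u lam δ hunorm hlampos hδpos
  set X : Set (EuclideanSpace ℝ (Fin 2)) := {x | ∀ i, x i ∈ E} with hX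
  have hA : ∀ x ∈ X, Tu u x ∈ Tu u '' X := fun x hx => ⟨x, hx, rfl⟩
  have hC : ∀ y ∈ Tu u '' X, ∃ x ∈ X, dist (Tu u x) y < δ := by
    rintro y ⟨x, hx, rfl⟩
    exact ⟨x, hx, by simpa using hδpos⟩
  have hB : ¬ (∀ x ∈ X, ∀ x' ∈ X,
      lam⁻¹ * dist x x' - δ ≤ dist (Tu u x) (Tu u x') ∧
      dist (Tu u x) (Tu u x') ≤ lam * dist x x' + δ) := fun hB => hqi ⟨hA, hB, hC⟩
  push_neg at hB
  obtain ⟨x, hx, x', hx', himp⟩ := hB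
  set q : ℝ := x 0 - x' 0 with hq
  set p : ℝ := x 1 - x' 1 with hp
  set r : ℝ := dist x x' with hrd
  have hreq : r = Real.sqrt (q^2 + p^2) := by
    rw [hrd, EuclideanSpace.dist_eq, Fin.sum_univ_two]
    congr 1
    simp [Real.dist_eq, sq_abs, hq, hp]
  have hqr : |q| ≤ r := hreq ▸ abs_le_sqrt_sq_add_sq q p
  have hpr : |p| ≤ r := by
    rw [hreq, show q^2+p^2 = p^2+q^2 by ring]
    exact abs_le_sqrt_sq_add_sq p q
  have hrqp : r ≤ |q| + |p| := hreq ▸ sqrt_sq_add_sq_le q p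
  have hTd : dist (Tu u x) (Tu u x') = |q*s - p|/c0 := by
    rw [Real.dist_eq]
    have h1 : Tu u x - Tu u x' = (q*s - p)/c0 := by
      simp only [Tu, hu0, hu1, hq, hp]
      field_simp
      ring
    rw [h1, abs_div, abs_of_pos hc0pos]
  have hlam2 : 2 ≤ lam := helper_lam c0 |s| ε' hc01 (abs_nonneg s) hε'pos hε'1
  have hub : dist (Tu u x) (Tu u x') ≤ lam * r + δ := by
    rw [hTd]
    exact helper_ub s q p r c0 lam δ hc01 hsc0 hqr hpr hlam2 hδpos
  have hlb : dist (Tu u x) (Tu u x') < lam⁻¹ * r - δ := by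
    by_contra hcon
    push_neg at hcon
    exact absurd (himp hcon) (not_lt.mpr hub)
  rw [hTd] at hlb
  obtain ⟨hqM, hfin⟩ := helper_main s ε M q p r hε hM hqr hpr hrqp hlb
  exact ⟨p, ⟨x 1, hx 1, x' 1, hx' 1, rfl⟩, q, ⟨x 0, hx 0, x' 0, hx' 0, rfl⟩, hqM, hfin⟩


lemma aux_baire (D : Set ℝ)
    (hr : ∀ s ε M : ℝ, 0 < ε → 0 < M → ∃ p ∈ D, ∃ q ∈ D, M < |q| ∧ |p - s*q| < ε*|q|) :
    ∃ a b : ℝ, ∀ t ε : ℝ, 0 < ε → ∃ p ∈ D, ∃ q ∈ D, |a*p + b*q - t| < ε := by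
  set U : ℚ × ℕ → Set (ℝ × ℝ) := fun tn =>
    {ab : ℝ × ℝ | ∃ p ∈ D, ∃ q ∈ D, |ab.1*p + ab.2*q - (tn.1 : ℝ)| < 1/(tn.2+1)} with hU
  have hopen : ∀ tn, IsOpen (U tn) := by
    intro tn
    have : U tn = ⋃ p ∈ D, ⋃ q ∈ D,
        {ab : ℝ × ℝ | |ab.1*p + ab.2*q - (tn.1 : ℝ)| < 1/(tn.2+1)} := by
      ext ab; simp [hU]
    rw [this]
    refine isOpen_biUnion fun p _ => isOpen_biUnion fun q _ => ?_
    have hc : Continuous fun ab : ℝ × ℝ => |ab.1*p + ab.2*q - (tn.1 : ℝ)| := by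
      continuity
    exact isOpen_lt hc continuous_const
  have hdense : ∀ tn, Dense (U tn) := by
    rintro ⟨t, n⟩
    rw [Metric.dense_iff]
    rintro ⟨a₀, b₀⟩ r hrpos
    set a : ℝ := if a₀ = 0 then r/2 else a₀ with ha
    have haa : |a - a₀| < r := by
      rcases eq_or_ne a₀ 0 with h|h <;> simp [ha, h, abs_of_pos, hrpos] <;> linarith [abs_of_pos (by linarith : (0:ℝ) < r/2)]
    have ha0 : a ≠ 0 := by
      rcases eq_or_ne a₀ 0 with h|h <;> simp [ha, h]
      positivity
    have hapos : 0 < |a| := abs_pos.mpr ha0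
    set s : ℝ := -b₀/a with hs
    set η : ℝ := r/(2*(|a|+1)) with hη
    have hηpos : 0 < η := by positivity
    set M : ℝ := 2*(|(t:ℝ)|+1)/r with hM
    have hMpos : 0 < M := by positivity
    obtain ⟨p, hp, q, hq, hqM, hpq⟩ := hr s η M hηpos hMpos
    have hq0 : q ≠ 0 := by
      intro h; rw [h, abs_zero] at hqM; linarith
    have hqpos : 0 < |q| := abs_pos.mpr hq0
    set b : ℝ := (t - a*p)/q with hb
    refine ⟨(a, b), ?_, ?_⟩
    · rw [mem_ball, Prod.dist_eq]
      have hbb : |b - b₀| < r := by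
        have hbeq : b - b₀ = t/q - a*((p - s*q)/q) := by
          field_simp [hb, hs]
          rw [hb, hs]
          field_simp
          ring
        have h1 : |(t:ℝ)/q| < r/2 := by
          rw [abs_div, div_lt_iff₀ hqpos]
          have key : r/2 * M = |(t:ℝ)| + 1 := by
            rw [hM]; field_simp
          have key2 : r/2 * M < r/2 * |q| :=
            mul_lt_mul_of_pos_left hqM (half_pos hrpos)
          linarith
        have h2 : |a*((p - s*q)/q)| < r/2 := by
          rw [abs_mul, abs_div]
          have : |p - s*q|/|q| < η := by
            rw [div_lt_iff₀ hqpos]; linarith [hpq]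
          calc |a| * (|p - s*q|/|q|) ≤ |a| * η := by nlinarith [hqM, hrpos, abs_nonneg ((t:ℝ))]
            _ < r/2 := by
              rw [hη]
              rw [mul_div_assoc']
              rw [div_lt_div_iff₀ (by positivity) (by norm_num)]
              nlinarith [hqM, hrpos, abs_nonneg ((t:ℝ))]
        calc |b - b₀| = |t/q - a*((p - s*q)/q)| := by rw [hbeq]
          _ ≤ |t/q| + |a*((p - s*q)/q)| := abs_sub _ _
          _ < r := by linarith
      simp only [max_lt_iff]
      constructor <;> rw [Real.dist_eq] <;> assumption
    · refine ⟨p, hp, q, hq, ?_⟩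
      have hz : |a*p + b*q - (t:ℝ)| = 0 := by
        rw [hb]; field_simp
        rw [show a*p + (t - a*p) - (t:ℝ) = 0 by ring, abs_zero]
      rw [hz]
      positivity
  have hD : Dense (⋂ tn, U tn) := dense_iInter_of_isOpen hopen hdense
  obtain ⟨⟨a, b⟩, hab⟩ := hD.nonempty
  simp only [mem_iInter] at hab
  refine ⟨a, b, fun t ε hε => ?_⟩
  obtain ⟨t', ht'⟩ := exists_rat_near t (by linarith : (0:ℝ) < ε/2)
  obtain ⟨n, hn⟩ := exists_nat_one_div_lt (by linarith : (0:ℝ) < ε/2)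
  obtain ⟨p, hp, q, hq, h⟩ := hab (t', n)
  refine ⟨p, hp, q, hq, ?_⟩
  have h' : |a*p + b*q - (t':ℝ)| < ε/2 := lt_trans h (by exact_mod_cast hn)
  have : |a*p + b*q - t| ≤ |a*p + b*q - (t':ℝ)| + |(t':ℝ) - t| := abs_sub_le _ _ _
  rw [abs_sub_comm] at ht'
  linarith


theorem stmt12 (E : Set ℝ) :
    (∃ (u : EuclideanSpace ℝ (Fin 2)) (lam δ : ℝ), ‖u‖ = 1 ∧ 0 < lam ∧ 0 < δ ∧
      IsQuasiIsometryOn (Tu u) {x : EuclideanSpace ℝ (Fin 2) | ∀ i, x i ∈ E}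
        (Tu u '' {x : EuclideanSpace ℝ (Fin 2) | ∀ i, x i ∈ E}) lam δ) ∨
    (∃ S : EuclideanSpace ℝ (Fin 4) →ₗ[ℝ] ℝ,
      Dense (⇑S '' {x : EuclideanSpace ℝ (Fin 4) | ∀ i, x i ∈ E})) := by
  by_cases h : (∃ (u : EuclideanSpace ℝ (Fin 2)) (lam δ : ℝ), ‖u‖ = 1 ∧ 0 < lam ∧ 0 < δ ∧
      IsQuasiIsometryOn (Tu u) {x : EuclideanSpace ℝ (Fin 2) | ∀ i, x i ∈ E}
        (Tu u '' {x : EuclideanSpace ℝ (Fin 2) | ∀ i, x i ∈ E}) lam δ)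
  · exact Or.inl h
  right
  push_neg at h
  have hratio := aux_ratio E h
  obtain ⟨a, b, hab⟩ := aux_baire {d : ℝ | ∃ x ∈ E, ∃ y ∈ E, x - y = d} hratio
  refine ⟨{ toFun := fun v : EuclideanSpace ℝ (Fin 4) => a*(v 0 - v 1) + b*(v 2 - v 3),
            map_add' := by
              intro v w
              simp only [PiLp.add_apply]
              ring
            map_smul' := by
              intro c v
              simp only [PiLp.smul_apply, smul_eq_mul, RingHom.id_apply]
              ring }, ?_⟩
  rw [Metric.dense_iff]
  intro t r hrpos
  obtain ⟨p, ⟨e1, he1, e2, he2, hpe⟩, q, ⟨e3, he3, e4, he4, hqe⟩, hlt⟩ := hab t r hrpos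
  set v : EuclideanSpace ℝ (Fin 4) := (WithLp.equiv 2 (Fin 4 → ℝ)).symm ![e1, e2, e3, e4] with hv
  have hv0 : v 0 = e1 := rfl
  have hv1 : v 1 = e2 := rfl
  have hv2 : v 2 = e3 := rfl
  have hv3 : v 3 = e4 := rfl
  refine ⟨a*(v 0 - v 1) + b*(v 2 - v 3), ?_, ?_⟩
  · rw [mem_ball, Real.dist_eq, hv0, hv1, hv2, hv3]
    rw [show e1 - e2 = p from hpe, show e3 - e4 = q from hqe]
    exact hlt
  · refine ⟨v, ?_, rfl⟩
    intro i
    fin_cases i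
    · exact he1
    · exact he2
    · exact he3
    · exact he4
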